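/- Let (W, S) be a Coxeter group with Coxeter matrix m, and let E = (E, ≤, ε) be a heap with pieces in S (with concurrency relation s 𝒞 t iff m(s,t) ≠ 2) that is the heap of a fully commutative element of W. Then every subinterval [a, b] of E, regarded as a subheap with the induced order and labelling, is also the heap of a fully commutative element of W (i.e. it satisfies the same two conditions). -/

import Mathlib

/-- `ρ` is a rank function for the poset `E`:
it increases by exactly 1 along covering relations. -/
def IsRankFunction {E : Type*} [PartialOrder E] (ρ : E → ℤ) : Prop :=
  ∀ a b : E, a ⋖ b → ρ b = ρ a + 1

/-- A poset is ranked if it admits a rank function. -/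
def Ranked (E : Type*) [PartialOrder E] : Prop :=
  ∃ ρ : E → ℤ, IsRankFunction ρ

/-- Two elements lie in the same connected component of the poset: the
equivalence relation generated by the covering relation. -/
def SameComponent {E : Type*} [PartialOrder E] (a b : E) : Prop :=
  Relation.EqvGen (fun x y : E => x ⋖ y) a b

/-- The heap axioms for a labelling `ε : E → P` of a poset `E` with
concurrency relation `C` on the pieces `P`. -/
def IsHeap {E P : Type*} [PartialOrder E] (C : P → P → Prop) (ε : E → P) : Prop :=
  (∀ α β : E, C (ε α) (ε β) → α ≤ β ∨ β ≤ α) ∧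
  (∀ α β : E, α ≤ β ↔ Relation.TransGen (fun x y : E => x ≤ y ∧ C (ε x) (ε y)) α β)

/-- `[a, b]` is a minimal balanced subinterval: `a ≠ b`, `ε a = ε b`, and the
only elements of `[a, b]` with label `ε a` are `a` and `b`. -/
def MinBalanced {E P : Type*} [PartialOrder E] (ε : E → P) (a b : E) : Prop :=
  a < b ∧ ε a = ε b ∧ ∀ c ∈ Set.Icc a b, ε c = ε a → c = a ∨ c = b

/-- The set `S_{[a,b]}` of elements of `[a, b]` whose label is distinct from,
but concurrent with, the label of `a`. -/
def intervalS {E P : Type*} [PartialOrder E] (C : P → P → Prop) (ε : E → P)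
    (a b : E) : Set E :=
  {c | c ∈ Set.Icc a b ∧ ε c ≠ ε a ∧ C (ε a) (ε c)}

/-- The concurrency subgraph of the heap (the simple graph on the labels
occurring in `E`, with distinct labels adjacent iff concurrent) is acyclic. -/
def NoCircuits {E P : Type*} [PartialOrder E] (C : P → P → Prop) (ε : E → P) : Prop :=
  (SimpleGraph.fromRel (fun v w : Set.range ε => C v.1 w.1)).IsAcyclic

/-- A single commutation move: swap an adjacent pair of commuting generators. -/
def CommMove {B : Type*} (M : CoxeterMatrix B) (ω ω' : List B) : Prop :=
  ∃ (l₁ l₂ : List B) (s t : B), M s t = 2 ∧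
    ω = l₁ ++ s :: t :: l₂ ∧ ω' = l₁ ++ t :: s :: l₂

/-- `w` is fully commutative: any two reduced words for `w` are related by a
sequence of commutation moves. -/
def IsFullyCommutative {B W : Type*} [Group W] {M : CoxeterMatrix B}
    (cs : CoxeterSystem M W) (w : W) : Prop :=
  ∀ ω ω' : List B, cs.IsReduced ω → cs.IsReduced ω' →
    cs.wordProd ω = w → cs.wordProd ω' = w →
      Relation.EqvGen (CommMove M) ω ω'

/-- The Coxeter system is FC-finite: only finitely many fully commutative elements. -/
def FCFinite {B W : Type*} [Group W] {M : CoxeterMatrix B}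
    (cs : CoxeterSystem M W) : Prop :=
  {w : W | IsFullyCommutative cs w}.Finite

/-- A heap with pieces in `B` (concurrency: `m s t ≠ 2`) is the heap of a fully
commutative element for the Coxeter matrix `m` (`m s t = 0` encodes `m(s,t) = ∞`):
there is no convex chain with labels alternating `s, t, s, …` of length `m s t ≥ 3`,
and no covering relation whose endpoints carry the same label. -/
def IsFCHeap {E B : Type*} [PartialOrder E] (m : B → B → ℕ) (ε : E → B) : Prop :=
  IsHeap (fun s t => m s t ≠ 2) ε ∧
  (∀ (s t : B) (k : ℕ), 3 ≤ k → m s t = k →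
    ¬ ∃ α : Fin k → E, StrictMono α ∧
        (∀ γ : E, ∀ i j : Fin k, α i < γ → γ < α j → ∃ l : Fin k, γ = α l) ∧
        (∀ i : Fin k, ε (α i) = if (i : ℕ) % 2 = 0 then s else t)) ∧
  (∀ α β : E, α ⋖ β → ε α ≠ ε β)

/-- Every subinterval [a, b] of the heap of a fully commutative element,
regarded as a subheap with the induced order and labelling, is again the heap
of a fully commutative element of the same Coxeter group. -/
private lemma transGen_le {E : Type*} [PartialOrder E] {r : E → E → Prop}
    (hr : ∀ x y, r x y → x ≤ y) {x y : E} (h : Relation.TransGen r x y) : x ≤ y := by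
  induction h with
  | single h => exact hr _ _ h
  | tail _ h₃ ih => exact ih.trans (hr _ _ h₃)

private lemma transGen_restrict {E : Type*} [PartialOrder E] {a b : E} {r : E → E → Prop}
    (hr : ∀ x y, r x y → x ≤ y) {x y : E} (h : Relation.TransGen r x y)
    (hx : x ∈ Set.Icc a b) (hy : y ∈ Set.Icc a b) :
    Relation.TransGen (fun u v : Set.Icc a b => r u.1 v.1) ⟨x, hx⟩ ⟨y, hy⟩ := by
  induction h with
  | single h => exact Relation.TransGen.single h
  | @tail c y h₂ h₃ ih =>
      have hc : c ∈ Set.Icc a b :=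
        ⟨hx.1.trans (transGen_le hr h₂), (hr _ _ h₃).trans hy.2⟩
      exact (ih hc).tail h₃

theorem subinterval_isFCHeap {B E : Type*} [PartialOrder E] [Finite E]
    (M : CoxeterMatrix B) (ε : E → B)
    (hheap : IsFCHeap (fun s t => M s t) ε) (a b : E) (hab : a ≤ b) :
    IsFCHeap (fun s t => M s t) (fun x : Set.Icc a b => ε x) := by
  obtain ⟨⟨hcomp, hchain⟩, halt, hcov⟩ := hheap
  refine ⟨⟨?_, ?_⟩, ?_, ?_⟩
  · intro α β h
    exact (hcomp α β h).imp (fun h => Subtype.coe_le_coe.mp h) (fun h => Subtype.coe_le_coe.mp h)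
  · intro α β
    constructor
    · intro h
      have h' : Relation.TransGen (fun x y : E => x ≤ y ∧ (M (ε x) (ε y) : ℕ) ≠ 2)
          (α : E) (β : E) := (hchain α β).mp h
      exact transGen_restrict (fun x y hxy => hxy.1) h' α.2 β.2
    · intro h
      have h' : Relation.TransGen (fun x y : E => x ≤ y ∧ (M (ε x) (ε y) : ℕ) ≠ 2)
          (α : E) (β : E) :=
        Relation.TransGen.lift Subtype.val (fun _ _ hxy => hxy) _ _ h
      exact Subtype.coe_le_coe.mp ((hchain α β).mpr h')
  · intro s t k hk hmk ⟨α, hmono, hconvex, hlabel⟩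
    refine halt s t k hk hmk ⟨fun i => (α i : E), ?_, ?_, ?_⟩
    · intro i j hij
      exact Subtype.coe_lt_coe.mpr (hmono hij)
    · intro γ i j hiγ hγj
      have hγmem : γ ∈ Set.Icc a b := ⟨(α i).2.1.trans hiγ.le, hγj.le.trans (α j).2.2⟩
      obtain ⟨l, hl⟩ := hconvex ⟨γ, hγmem⟩ i j (Subtype.coe_lt_coe.mp hiγ) (Subtype.coe_lt_coe.mp hγj)
      exact ⟨l, congrArg Subtype.val hl⟩
    · exact hlabel
  · intro α β hcover
    have : (α : E) ⋖ (β : E) := by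
      refine ⟨Subtype.coe_lt_coe.mpr hcover.1, fun γ h1 h2 => ?_⟩
      have hγmem : γ ∈ Set.Icc a b := ⟨α.2.1.trans h1.le, h2.le.trans β.2.2⟩
      exact hcover.2 (Subtype.coe_lt_coe.mp (show (α:E) < (⟨γ,hγmem⟩:Set.Icc a b) from h1))
        (Subtype.coe_lt_coe.mp (show ((⟨γ,hγmem⟩:Set.Icc a b):E) < β from h2))
    exact hcov _ _ this
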